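/- Let π : (Y,T₁,…,T_d) → (X,T₁,…,T_d) be a factor map between minimal distal ℤ^d-systems. If (Y,T₁,…,T_d) has the unique closing parallelepiped property, then (X,T₁,…,T_d) has the unique closing parallelepiped property. -/

import Mathlib

open Function Set

/-- The group of self-homeomorphisms of a topological space, under composition. -/
instance homeomorphGroup {X : Type*} [TopologicalSpace X] : Group (X ≃ₜ X) where
  mul f g := g.trans f
  one := Homeomorph.refl X
  inv := Homeomorph.symm
  mul_assoc _ _ _ := rfl
  one_mul _ := Homeomorph.ext fun _ => rfl
  mul_one _ := Homeomorph.ext fun _ => rfl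
  inv_mul_cancel f := Homeomorph.self_trans_symm f

variable {d : ℕ}

/-- The homeomorphism `T₁^{n₁ε₁} ⋯ T_d^{n_dε_d}` associated with `n ∈ ℤ^d` and a vertex
`ε ∈ {0,1}^d` of the cube. -/
def cubeMap {X : Type*} [TopologicalSpace X] (T : Fin d → X ≃ₜ X)
    (n : Fin d → ℤ) (ε : Fin d → Bool) : X ≃ₜ X :=
  ((List.finRange d).map (fun i => T i ^ (if ε i then n i else 0))).prod

/-- The space of directional dynamical cubes `Q_{T₁,…,T_d}(X)`. -/
def cubes {X : Type*} [TopologicalSpace X] (T : Fin d → X ≃ₜ X) :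
    Set ((Fin d → Bool) → X) :=
  closure {y | ∃ (x : X) (n : Fin d → ℤ), ∀ ε, y ε = cubeMap T n ε x}

/-- The group of homeomorphisms generated by `T₁,…,T_d`. -/
def genGroup {X : Type*} [TopologicalSpace X] (T : Fin d → X ≃ₜ X) : Subgroup (X ≃ₜ X) :=
  Subgroup.closure (Set.range T)

/-- Minimality: every orbit is dense. -/
def IsMinimalSystem {X : Type*} [TopologicalSpace X] (T : Fin d → X ≃ₜ X) : Prop :=
  ∀ x : X, Dense {y : X | ∃ g ∈ genGroup T, g x = y}

/-- Distality: `inf_{g ∈ G} dist (g x) (g y) > 0` whenever `x ≠ y`. -/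
def IsDistalSystem {X : Type*} [MetricSpace X] (T : Fin d → X ≃ₜ X) : Prop :=
  ∀ x y : X, x ≠ y → ∃ δ > 0, ∀ g ∈ genGroup T, δ ≤ dist (g x) (g y)

/-- Unique closing parallelepiped property: two cubes agreeing in `2^d - 1` of their
coordinates are equal. -/
def HasUCP {X : Type*} [TopologicalSpace X] (T : Fin d → X ≃ₜ X) : Prop :=
  ∀ x ∈ cubes T, ∀ y ∈ cubes T,
    ∀ ε₀ : Fin d → Bool, (∀ ε, ε ≠ ε₀ → x ε = y ε) → x = y

section Algebra

variable {X : Type*} [TopologicalSpace X] (T : Fin d → X ≃ₜ X)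

lemma hmul_apply (f g : X ≃ₜ X) (x : X) : (f * g) x = f (g x) := rfl

lemma hone_apply (x : X) : (1 : X ≃ₜ X) x = x := rfl

/-- product of powers with arbitrary exponent function -/
def pw (e : Fin d → ℤ) : X ≃ₜ X :=
  ((List.finRange d).map (fun i => T i ^ e i)).prod

lemma cubeMap_eq_pw (n : Fin d → ℤ) (ε : Fin d → Bool) :
    cubeMap T n ε = pw T (fun i => if ε i then n i else 0) := rfl

lemma commute_T (hcomm : ∀ i j : Fin d, ∀ x : X, T i (T j x) = T j (T i x))
    (i j : Fin d) : Commute (T i) (T j) :=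
  Homeomorph.ext fun x => (hcomm i j x)

lemma mem_genGroup_self (i : Fin d) : T i ∈ genGroup T :=
  Subgroup.subset_closure ⟨i, rfl⟩

lemma prod_pow_mul (hcomm : ∀ i j : Fin d, ∀ x : X, T i (T j x) = T j (T i x))
    (e f : Fin d → ℤ) (l : List (Fin d)) :
    (l.map fun i => T i ^ (e i + f i)).prod
      = (l.map fun i => T i ^ e i).prod * (l.map fun i => T i ^ f i).prod := by
  induction l with
  | nil => simp
  | cons i l ih =>
    have hc : Commute (T i ^ f i) ((l.map fun j => T j ^ e j).prod) := by
      apply Commute.list_prod_right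
      intro x hx
      simp only [List.mem_map] at hx
      obtain ⟨j, -, rfl⟩ := hx
      exact ((commute_T T hcomm i j).zpow_zpow _ _)
    rw [List.map_cons, List.map_cons, List.map_cons, List.prod_cons, List.prod_cons,
      List.prod_cons, ih, zpow_add, mul_assoc, ← mul_assoc (T i ^ f i), hc.eq,
      mul_assoc, ← mul_assoc]

lemma pw_mul (hcomm : ∀ i j : Fin d, ∀ x : X, T i (T j x) = T j (T i x)) (e f : Fin d → ℤ) :
    pw T (fun i => e i + f i) = pw T e * pw T f :=
  prod_pow_mul T hcomm e f _

lemma pw_congr {e f : Fin d → ℤ} (h : ∀ i, e i = f i) : pw T e = pw T f := by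
  unfold pw; congr 1; exact List.map_congr_left fun i _ => by rw [h i]

lemma pw_zero : pw T (fun _ => 0) = 1 := by
  unfold pw
  apply List.prod_eq_one
  intro x hx
  simp only [List.mem_map] at hx
  obtain ⟨j, -, rfl⟩ := hx
  exact zpow_zero _

lemma pw_mem (e : Fin d → ℤ) : pw T e ∈ genGroup T := by
  apply Subgroup.list_prod_mem
  intro x hx
  simp only [List.mem_map] at hx
  obtain ⟨j, -, rfl⟩ := hx
  exact Subgroup.zpow_mem _ (mem_genGroup_self T j) _

lemma cubeMap_mem (n : Fin d → ℤ) (ε : Fin d → Bool) : cubeMap T n ε ∈ genGroup T := by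
  rw [cubeMap_eq_pw]; exact pw_mem T _

lemma commute_gen_T (hcomm : ∀ i j : Fin d, ∀ x : X, T i (T j x) = T j (T i x))
    {g : X ≃ₜ X} (hg : g ∈ genGroup T) (i : Fin d) : Commute g (T i) := by
  induction hg using Subgroup.closure_induction with
  | mem x hx => obtain ⟨j, rfl⟩ := hx; exact commute_T T hcomm j i
  | one => exact Commute.one_left _
  | mul x y hx hy ihx ihy => exact ihx.mul_left ihy
  | inv x hx ih => exact ih.inv_left

lemma commute_gen_pw (hcomm : ∀ i j : Fin d, ∀ x : X, T i (T j x) = T j (T i x))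
    {g : X ≃ₜ X} (hg : g ∈ genGroup T) (e : Fin d → ℤ) :
    Commute g (pw T e) := by
  apply Commute.list_prod_right
  intro x hx
  simp only [List.mem_map] at hx
  obtain ⟨j, -, rfl⟩ := hx
  exact (commute_gen_T T hcomm hg j).zpow_right _

lemma gen_cubeMap_apply (hcomm : ∀ i j : Fin d, ∀ x : X, T i (T j x) = T j (T i x))
    {g : X ≃ₜ X} (hg : g ∈ genGroup T) (n : Fin d → ℤ)
    (ε : Fin d → Bool) (x : X) :
    g (cubeMap T n ε x) = cubeMap T n ε (g x) := by
  have h : g * cubeMap T n ε = cubeMap T n ε * g := by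
    rw [cubeMap_eq_pw]
    exact (commute_gen_pw T hcomm hg (fun i => if ε i then n i else 0)).eq
  calc g (cubeMap T n ε x) = (g * cubeMap T n ε) x := rfl
    _ = (cubeMap T n ε * g) x := by rw [h]
    _ = cubeMap T n ε (g x) := rfl

end Algebra

section CubeOps

variable {X : Type*} [TopologicalSpace X] (T : Fin d → X ≃ₜ X)

/-- basic cube point -/
def pt (n : Fin d → ℤ) (z : X) : (Fin d → Bool) → X := fun ε => cubeMap T n ε z

lemma pt_mem_basic (n : Fin d → ℤ) (z : X) :
    pt T n z ∈ {y : (Fin d → Bool) → X | ∃ (x : X) (n' : Fin d → ℤ), ∀ ε, y ε = cubeMap T n' ε x} :=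
  ⟨z, n, fun _ => rfl⟩

lemma pt_mem (n : Fin d → ℤ) (z : X) : pt T n z ∈ cubes T :=
  subset_closure (pt_mem_basic T n z)

lemma pt_cont (n : Fin d → ℤ) : Continuous (fun z => pt T n z) :=
  continuous_pi fun ε => (cubeMap T n ε).continuous

lemma cubeMap_zero_apply (ε : Fin d → Bool) (z : X) : cubeMap T (fun _ => 0) ε z = z := by
  have : cubeMap T (fun _ => 0) ε = 1 := by
    rw [cubeMap_eq_pw]
    rw [pw_congr T (f := fun _ => (0:ℤ)) (fun i => by by_cases h : ε i <;> simp [h])]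
    exact pw_zero T
  rw [this]; rfl

lemma pt_zero (z : X) : pt T (fun _ => 0) z = fun _ => z := by
  funext ε; exact cubeMap_zero_apply T ε z

/-- a continuous self-map of the cube space mapping basic points to basic points
maps `cubes` into `cubes`. -/
lemma mapsTo_cubes {F : ((Fin d → Bool) → X) → ((Fin d → Bool) → X)}
    (hF : Continuous F)
    (hbasic : ∀ (z : X) (n : Fin d → ℤ), ∃ (z' : X) (n' : Fin d → ℤ),
      F (pt T n z) = pt T n' z') :
    ∀ W ∈ cubes T, F W ∈ cubes T := by
  intro W hW
  have h1 : F '' (cubes T) ⊆ closure (F '' {y | ∃ x n, ∀ ε, y ε = cubeMap T n ε x}) :=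
    image_closure_subset_closure_image hF
  have h2 : F '' {y : (Fin d → Bool) → X | ∃ x n, ∀ ε, y ε = cubeMap T n ε x}
      ⊆ {y | ∃ x n, ∀ ε, y ε = cubeMap T n ε x} := by
    rintro _ ⟨W', ⟨z, n, hz⟩, rfl⟩
    have : W' = pt T n z := funext fun ε => hz ε
    subst this
    obtain ⟨z', n', h⟩ := hbasic z n
    rw [h]; exact pt_mem_basic T n' z'
  exact closure_mono h2 (h1 ⟨W, hW, rfl⟩)

/-- doubling operator in direction i -/
def dbl (i : Fin d) (W : (Fin d → Bool) → X) : (Fin d → Bool) → X :=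
  fun ε => W (Function.update ε i false)

lemma dbl_cont (i : Fin d) : Continuous (dbl (X := X) i) :=
  continuous_pi fun ε => continuous_apply (Function.update ε i false)

lemma cubeMap_update_false (n : Fin d → ℤ) (ε : Fin d → Bool) (i : Fin d) :
    cubeMap T n (Function.update ε i false) = cubeMap T (Function.update n i 0) ε := by
  rw [cubeMap_eq_pw, cubeMap_eq_pw]
  apply pw_congr
  intro j
  by_cases hj : j = i
  · subst hj; simp
  · rw [Function.update_of_ne hj, Function.update_of_ne hj]

lemma dbl_pt (i : Fin d) (n : Fin d → ℤ) (z : X) :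
    dbl i (pt T n z) = pt T (Function.update n i 0) z := by
  funext ε
  show cubeMap T n (Function.update ε i false) z = _
  rw [cubeMap_update_false]; rfl

lemma dbl_cubes (i : Fin d) : ∀ W ∈ cubes T, dbl i W ∈ cubes T :=
  mapsTo_cubes T (dbl_cont i) (fun z n => ⟨z, Function.update n i 0, dbl_pt T i n z⟩)

/-- reflection taking the slot ε₀ to the all-ones slot -/
def refl0 (ε₀ : Fin d → Bool) (W : (Fin d → Bool) → X) : (Fin d → Bool) → X :=
  fun ε => W (fun i => if ε₀ i then ε i else !(ε i))

lemma refl0_cont (ε₀ : Fin d → Bool) : Continuous (refl0 (X := X) ε₀) :=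
  continuous_pi fun ε => continuous_apply _

lemma refl0_top (ε₀ : Fin d → Bool) (W : (Fin d → Bool) → X) :
    refl0 ε₀ W (fun _ => true) = W ε₀ := by
  show W _ = W ε₀
  congr 1
  funext i
  by_cases h : ε₀ i <;> simp [h]

lemma refl0_arg_ne (ε₀ : Fin d → Bool) (ε : Fin d → Bool) (hε : ε ≠ fun _ => true) :
    (fun i => if ε₀ i then ε i else !(ε i)) ≠ ε₀ := by
  intro hcontra
  apply hε
  funext i
  have := congrFun hcontra i
  by_cases h : ε₀ i <;> simp [h] at this <;> simp [this]

lemma refl0_pt (hcomm : ∀ i j : Fin d, ∀ x : X, T i (T j x) = T j (T i x))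
    (ε₀ : Fin d → Bool) (n : Fin d → ℤ) (z : X) :
    refl0 ε₀ (pt T n z) =
      pt T (fun i => if ε₀ i then n i else -n i) (cubeMap T n (fun i => !(ε₀ i)) z) := by
  funext ε
  show cubeMap T n (fun i => if ε₀ i then ε i else !(ε i)) z = _
  have key : cubeMap T n (fun i => if ε₀ i then ε i else !(ε i))
      = cubeMap T (fun i => if ε₀ i then n i else -n i) ε * cubeMap T n (fun i => !(ε₀ i)) := by
    rw [cubeMap_eq_pw, cubeMap_eq_pw, cubeMap_eq_pw, ← pw_mul T hcomm]
    apply pw_congr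
    intro i
    by_cases h0 : ε₀ i <;> by_cases hε : ε i <;> simp [h0, hε]
  rw [key]; rfl

lemma refl0_cubes (hcomm : ∀ i j : Fin d, ∀ x : X, T i (T j x) = T j (T i x))
    (ε₀ : Fin d → Bool) : ∀ W ∈ cubes T, refl0 ε₀ W ∈ cubes T :=
  mapsTo_cubes T (refl0_cont ε₀) (fun z n => ⟨_, _, refl0_pt T hcomm ε₀ n z⟩)

end CubeOps

section Equivariance

variable {Y X : Type*} [TopologicalSpace Y] [TopologicalSpace X]
  (S : Fin d → Y ≃ₜ Y) (T : Fin d → X ≃ₜ X) (π : Y → X)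

lemma pi_inv (hfac : ∀ (i : Fin d) (y : Y), π (S i y) = T i (π y)) (i : Fin d) (w : Y) :
    π ((S i)⁻¹ w) = (T i)⁻¹ (π w) := by
  have h2 : S i ((S i)⁻¹ w) = w := by
    show (S i * (S i)⁻¹) w = w
    rw [mul_inv_cancel]; rfl
  have h1 : π w = T i (π ((S i)⁻¹ w)) := by
    conv_lhs => rw [← h2]
    exact hfac i _
  have h3 : ∀ a : X, (T i)⁻¹ (T i a) = a := by
    intro a
    show ((T i)⁻¹ * T i) a = a
    rw [inv_mul_cancel]; rfl
  rw [h1, h3]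

lemma pi_zpow (hfac : ∀ (i : Fin d) (y : Y), π (S i y) = T i (π y)) (i : Fin d) (k : ℤ) :
    ∀ y, π ((S i ^ k) y) = (T i ^ k) (π y) := by
  induction k using Int.induction_on with
  | zero => intro y; simp only [zpow_zero]; rfl
  | succ k ih =>
    intro y
    have hs : (S i ^ ((k:ℤ)+1)) y = (S i ^ (k:ℤ)) (S i y) := by rw [zpow_add_one]; rfl
    have ht : (T i ^ ((k:ℤ)+1)) (π y) = (T i ^ (k:ℤ)) (T i (π y)) := by
      rw [zpow_add_one]; rfl
    rw [hs, ih (S i y), hfac i y, ht]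
  | pred k ih =>
    intro y
    have hs : (S i ^ (-(k:ℤ)-1)) y = (S i ^ (-(k:ℤ))) ((S i)⁻¹ y) := by
      rw [zpow_sub_one]; rfl
    have ht : (T i ^ (-(k:ℤ)-1)) (π y) = (T i ^ (-(k:ℤ))) ((T i)⁻¹ (π y)) := by
      rw [zpow_sub_one]; rfl
    rw [hs, ih _, pi_inv S T π hfac, ht]

lemma pi_prod (hfac : ∀ (i : Fin d) (y : Y), π (S i y) = T i (π y)) (e : Fin d → ℤ)
    (l : List (Fin d)) :
    ∀ y, π (((l.map fun i => S i ^ e i).prod) y) = ((l.map fun i => T i ^ e i).prod) (π y) := by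
  induction l with
  | nil => intro y; simp only [List.map_nil, List.prod_nil]; rfl
  | cons i l ih =>
    intro y
    simp only [List.map_cons, List.prod_cons]
    have hs : (S i ^ e i * (l.map fun j => S j ^ e j).prod) y
        = (S i ^ e i) (((l.map fun j => S j ^ e j).prod) y) := rfl
    have ht : (T i ^ e i * (l.map fun j => T j ^ e j).prod) (π y)
        = (T i ^ e i) (((l.map fun j => T j ^ e j).prod) (π y)) := rfl
    rw [hs, ht, ← ih y, pi_zpow S T π hfac]

lemma pi_pw (hfac : ∀ (i : Fin d) (y : Y), π (S i y) = T i (π y)) (e : Fin d → ℤ) (y : Y) :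
    π (pw S e y) = pw T e (π y) := pi_prod S T π hfac e _ y

lemma pi_cubeMap (hfac : ∀ (i : Fin d) (y : Y), π (S i y) = T i (π y)) (n : Fin d → ℤ)
    (ε : Fin d → Bool) (y : Y) :
    π (cubeMap S n ε y) = cubeMap T n ε (π y) := by
  rw [cubeMap_eq_pw, cubeMap_eq_pw]
  exact pi_pw S T π hfac _ y

lemma pi_gen (hfac : ∀ (i : Fin d) (y : Y), π (S i y) = T i (π y)) :
    ∀ g ∈ genGroup S, ∃ h ∈ genGroup T, ∀ y, π (g y) = h (π y) := by
  intro g hg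
  induction hg using Subgroup.closure_induction with
  | mem x hx =>
    obtain ⟨i, rfl⟩ := hx
    exact ⟨T i, mem_genGroup_self T i, hfac i⟩
  | one => exact ⟨1, one_mem _, fun y => rfl⟩
  | mul a b ha hb iha ihb =>
    obtain ⟨h₁, hm₁, he₁⟩ := iha
    obtain ⟨h₂, hm₂, he₂⟩ := ihb
    refine ⟨h₁ * h₂, mul_mem hm₁ hm₂, fun y => ?_⟩
    calc π ((a * b) y) = π (a (b y)) := rfl
      _ = h₁ (π (b y)) := he₁ _
      _ = h₁ (h₂ (π y)) := by rw [he₂]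
      _ = (h₁ * h₂) (π y) := rfl
  | inv a ha iha =>
    obtain ⟨h, hm, he⟩ := iha
    refine ⟨h⁻¹, inv_mem hm, fun y => ?_⟩
    have h2 : a (a⁻¹ y) = y := by
      show (a * a⁻¹) y = y
      rw [mul_inv_cancel]; rfl
    have h3 : ∀ b : X, h⁻¹ (h b) = b := by
      intro b
      show (h⁻¹ * h) b = b
      rw [inv_mul_cancel]; rfl
    have h1 : π y = h (π (a⁻¹ y)) := by
      conv_lhs => rw [← h2]
      exact he _
    rw [h1, h3]

end Equivariance

lemma exists_idem_comp {Z : Type*} [TopologicalSpace Z] [CompactSpace Z] [T2Space Z]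
    (A : Set (Z → Z)) (hne : A.Nonempty) (hc : IsCompact A)
    (hmul : ∀ p ∈ A, ∀ q ∈ A, p ∘ q ∈ A) : ∃ u ∈ A, u ∘ u = u := by
  letI : Mul A := ⟨fun a b => ⟨a.1 ∘ b.1, hmul _ a.2 _ b.2⟩⟩
  letI : Semigroup A := { mul_assoc := fun a b c => Subtype.ext rfl }
  haveI : CompactSpace A := isCompact_iff_compactSpace.mp hc
  haveI : Nonempty A := hne.to_subtype
  have hcont : ∀ r : A, Continuous (fun p : A => p * r) := by
    intro r
    apply Continuous.subtype_mk
    exact continuous_pi fun z => (continuous_apply (r.1 z)).comp continuous_subtype_val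
  obtain ⟨m, hm⟩ := exists_idempotent_of_compact_t2_of_continuous_mul_left hcont
  exact ⟨m.1, m.2, congrArg Subtype.val hm⟩

section Ellis

variable {Y : Type*} [MetricSpace Y] [CompactSpace Y] (S : Fin d → Y ≃ₜ Y)

/-- the action of `(n, g)` on the cube space -/
def hmapS (n : Fin d → ℤ) (g : Y ≃ₜ Y) : ((Fin d → Bool) → Y) → ((Fin d → Bool) → Y) :=
  fun W ε => cubeMap S n ε (g (W ε))

/-- the acting set of transformations -/
def hSetS : Set (((Fin d → Bool) → Y) → ((Fin d → Bool) → Y)) :=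
  {f | ∃ n g, g ∈ genGroup S ∧ f = hmapS S n g}

/-- Ellis-type hull of the action -/
def ES : Set (((Fin d → Bool) → Y) → ((Fin d → Bool) → Y)) := closure (hSetS S)

lemma hmapS_cont (n : Fin d → ℤ) (g : Y ≃ₜ Y) : Continuous (hmapS S n g) :=
  continuous_pi fun ε =>
    ((cubeMap S n ε).continuous.comp (g.continuous.comp (continuous_apply ε)))

lemma cubeMap_mul (hcomm : ∀ i j : Fin d, ∀ y : Y, S i (S j y) = S j (S i y))
    (n m : Fin d → ℤ) (ε : Fin d → Bool) :
    cubeMap S (fun i => n i + m i) ε = cubeMap S n ε * cubeMap S m ε := by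
  rw [cubeMap_eq_pw, cubeMap_eq_pw, cubeMap_eq_pw, ← pw_mul S hcomm]
  apply pw_congr
  intro i
  by_cases h : ε i <;> simp [h]

lemma hmapS_pt (hcomm : ∀ i j : Fin d, ∀ y : Y, S i (S j y) = S j (S i y))
    (n m : Fin d → ℤ) {g : Y ≃ₜ Y} (hg : g ∈ genGroup S) (z : Y) :
    hmapS S n g (pt S m z) = pt S (fun i => n i + m i) (g z) := by
  funext ε
  show cubeMap S n ε (g (cubeMap S m ε z)) = cubeMap S (fun i => n i + m i) ε (g z)
  rw [gen_cubeMap_apply S hcomm hg, cubeMap_mul S hcomm]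
  rfl

lemma hmapS_cubes (hcomm : ∀ i j : Fin d, ∀ y : Y, S i (S j y) = S j (S i y))
    (n : Fin d → ℤ) {g : Y ≃ₜ Y} (hg : g ∈ genGroup S) :
    ∀ W ∈ cubes S, hmapS S n g W ∈ cubes S :=
  mapsTo_cubes S (hmapS_cont S n g)
    (fun z m => ⟨g z, fun i => n i + m i, hmapS_pt S hcomm n m hg z⟩)

lemma hmapS_comp (hcomm : ∀ i j : Fin d, ∀ y : Y, S i (S j y) = S j (S i y))
    (n m : Fin d → ℤ) {g h : Y ≃ₜ Y} (hg : g ∈ genGroup S) :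
    hmapS S n g ∘ hmapS S m h = hmapS S (fun i => n i + m i) (g * h) := by
  funext W ε
  show cubeMap S n ε (g (cubeMap S m ε (h (W ε))))
    = cubeMap S (fun i => n i + m i) ε ((g * h) (W ε))
  rw [gen_cubeMap_apply S hcomm hg, cubeMap_mul S hcomm]
  rfl

lemma hSetS_comp (hcomm : ∀ i j : Fin d, ∀ y : Y, S i (S j y) = S j (S i y))
    {f f' : ((Fin d → Bool) → Y) → ((Fin d → Bool) → Y)}
    (hf : f ∈ hSetS S) (hf' : f' ∈ hSetS S) : f ∘ f' ∈ hSetS S := by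
  obtain ⟨n, g, hg, rfl⟩ := hf
  obtain ⟨m, h, hh, rfl⟩ := hf'
  exact ⟨fun i => n i + m i, g * h, mul_mem hg hh, hmapS_comp S hcomm n m hg⟩

lemma id_mem_hSetS : id ∈ hSetS S := by
  refine ⟨fun _ => 0, 1, one_mem _, ?_⟩
  funext W ε
  show W ε = cubeMap S (fun _ => 0) ε ((1 : Y ≃ₜ Y) (W ε))
  rw [cubeMap_zero_apply]
  rfl

lemma ES_compact : IsCompact (ES S) := isClosed_closure.isCompact

lemma ES_comp (hcomm : ∀ i j : Fin d, ∀ y : Y, S i (S j y) = S j (S i y))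
    {p q : ((Fin d → Bool) → Y) → ((Fin d → Bool) → Y)}
    (hp : p ∈ ES S) (hq : q ∈ ES S) : p ∘ q ∈ ES S := by
  have step1 : ∀ f ∈ hSetS S, f ∘ q ∈ ES S := by
    intro f hf
    obtain ⟨n, g, hg, rfl⟩ := hf
    have hcont : Continuous (fun r : ((Fin d → Bool) → Y) → ((Fin d → Bool) → Y) =>
        hmapS S n g ∘ r) := by
      apply continuous_pi
      intro z
      exact (hmapS_cont S n g).comp (continuous_apply z)
    have himg : (fun r => hmapS S n g ∘ r) '' hSetS S ⊆ hSetS S := by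
      rintro _ ⟨r, hr, rfl⟩
      exact hSetS_comp S hcomm ⟨n, g, hg, rfl⟩ hr
    have : hmapS S n g ∘ q ∈ (fun r => hmapS S n g ∘ r) '' closure (hSetS S) :=
      ⟨q, hq, rfl⟩
    exact closure_mono himg (image_closure_subset_closure_image hcont this)
  have hcont2 : Continuous (fun r : ((Fin d → Bool) → Y) → ((Fin d → Bool) → Y) =>
      r ∘ q) := continuous_pi fun z => continuous_apply (q z)
  have himg2 : (fun r => r ∘ q) '' hSetS S ⊆ ES S := by
    rintro _ ⟨r, hr, rfl⟩
    exact step1 r hr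
  have : p ∘ q ∈ (fun r => r ∘ q) '' closure (hSetS S) := ⟨p, hp, rfl⟩
  have h2 := image_closure_subset_closure_image hcont2 this
  exact closure_minimal himg2 isClosed_closure h2

lemma ES_inj (hdistS : IsDistalSystem S) {p : ((Fin d → Bool) → Y) → ((Fin d → Bool) → Y)}
    (hp : p ∈ ES S) {z z' : (Fin d → Bool) → Y} (hne : z ≠ z') : p z ≠ p z' := by
  obtain ⟨ε, hε⟩ : ∃ ε, z ε ≠ z' ε := by
    by_contra hcon
    push_neg at hcon
    exact hne (funext hcon)
  obtain ⟨δ, hδ, hd⟩ := hdistS (z ε) (z' ε) hε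
  have hclosed : IsClosed {f : ((Fin d → Bool) → Y) → ((Fin d → Bool) → Y) |
      δ ≤ dist (f z ε) (f z' ε)} := by
    apply isClosed_le continuous_const
    exact Continuous.dist
      ((continuous_apply ε).comp (continuous_apply z))
      ((continuous_apply ε).comp (continuous_apply z'))
  have hsub : hSetS S ⊆ {f | δ ≤ dist (f z ε) (f z' ε)} := by
    rintro _ ⟨n, g, hg, rfl⟩
    have : hmapS S n g z ε = (cubeMap S n ε * g) (z ε) := rfl
    have h2 : hmapS S n g z' ε = (cubeMap S n ε * g) (z' ε) := rfl
    simp only [Set.mem_setOf_eq, this, h2]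
    exact hd _ (mul_mem (cubeMap_mem S n ε) hg)
  have hle : δ ≤ dist (p z ε) (p z' ε) := closure_minimal hsub hclosed hp
  intro hcon
  rw [hcon, dist_self] at hle
  linarith

lemma ES_leftinv (hcomm : ∀ i j : Fin d, ∀ y : Y, S i (S j y) = S j (S i y))
    (hdistS : IsDistalSystem S) {p : ((Fin d → Bool) → Y) → ((Fin d → Bool) → Y)}
    (hp : p ∈ ES S) : ∃ q ∈ ES S, q ∘ p = id := by
  set A := (fun r => r ∘ p) '' ES S with hA
  have hAsub : A ⊆ ES S := by
    rintro _ ⟨r, hr, rfl⟩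
    exact ES_comp S hcomm hr hp
  have hne : A.Nonempty := ⟨id ∘ p, id, subset_closure (id_mem_hSetS S), rfl⟩
  have hcomp : IsCompact A :=
    (ES_compact S).image (continuous_pi fun z => continuous_apply (p z))
  have hmul : ∀ a ∈ A, ∀ b ∈ A, a ∘ b ∈ A := by
    rintro _ ⟨r, hr, rfl⟩ _ ⟨r', hr', rfl⟩
    exact ⟨r ∘ p ∘ r', ES_comp S hcomm hr (ES_comp S hcomm hp hr'), rfl⟩
  obtain ⟨u, huA, hu⟩ := exists_idem_comp A hne hcomp hmul
  have huE : u ∈ ES S := hAsub huA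
  have hid : u = id := by
    funext z
    by_contra hne2
    exact ES_inj S hdistS huE (z := u z) (z' := z) (show u z ≠ z from hne2) (congrFun hu z)
  obtain ⟨q, hq, hqp⟩ := huA
  exact ⟨q, hq, hqp.trans hid⟩

lemma cubes_sub_ev (hminS : IsMinimalSystem S) (y₀ : Y) :
    cubes S ⊆ (fun f => f (fun _ => y₀)) '' ES S := by
  have hev : Continuous
      (fun f : ((Fin d → Bool) → Y) → ((Fin d → Bool) → Y) => f (fun _ => y₀)) :=
    continuous_apply _
  have himg : IsCompact ((fun f => f (fun _ => y₀)) '' ES S) := (ES_compact S).image hev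
  apply closure_minimal _ himg.isClosed
  rintro W ⟨z, n, hz⟩
  have hW : W = pt S n z := funext hz
  rw [hW]
  have hz2 : z ∈ closure {w | ∃ g ∈ genGroup S, g y₀ = w} := by
    have h := hminS y₀
    rw [dense_iff_closure_eq] at h
    rw [h]; trivial
  have h3 : pt S n z ∈ closure ((fun w => pt S n w) '' {w | ∃ g ∈ genGroup S, g y₀ = w}) :=
    image_closure_subset_closure_image (pt_cont S n) ⟨z, hz2, rfl⟩
  have h5 : (fun w => pt S n w) '' {w | ∃ g ∈ genGroup S, g y₀ = w}
      ⊆ (fun f => f (fun _ => y₀)) '' ES S := by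
    rintro _ ⟨w, ⟨g, hg, rfl⟩, rfl⟩
    refine ⟨hmapS S n g, subset_closure ⟨n, g, hg, rfl⟩, ?_⟩
    funext ε
    rfl
  exact closure_minimal h5 himg.isClosed h3

lemma ret (hcomm : ∀ i j : Fin d, ∀ y : Y, S i (S j y) = S j (S i y))
    (hdistS : IsDistalSystem S) (hminS : IsMinimalSystem S) (y₀ : Y)
    {W : (Fin d → Bool) → Y} (hW : W ∈ cubes S) :
    (fun _ => y₀) ∈ closure ((fun f => f W) '' hSetS S) := by
  obtain ⟨p, hp, hpΔ⟩ := cubes_sub_ev S hminS y₀ hW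
  obtain ⟨q, hq, hqp⟩ := ES_leftinv S hcomm hdistS hp
  have h1 : q W = (fun _ => y₀) := by
    rw [← hpΔ]
    exact congrFun hqp _
  have hev : Continuous
      (fun f : ((Fin d → Bool) → Y) → ((Fin d → Bool) → Y) => f W) := continuous_apply W
  have h2 : q W ∈ closure ((fun f => f W) '' hSetS S) :=
    image_closure_subset_closure_image hev ⟨q, hq, rfl⟩
  rw [h1] at h2
  exact h2

lemma transport (hcomm : ∀ i j : Fin d, ∀ y : Y, S i (S j y) = S j (S i y))
    (hdistS : IsDistalSystem S) (hminS : IsMinimalSystem S) (y₀ : Y)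
    (V V' : (Fin d → Bool) → Y) (hV : V ∈ cubes S) (hV' : V' ∈ cubes S) :
    ∃ Vs ∈ cubes S,
      (Vs, (fun _ => y₀ : (Fin d → Bool) → Y))
        ∈ closure ((fun f => (f V, f V')) '' hSetS S) := by
  set K := closure ((fun f => (f V, f V')) '' hSetS S) with hK
  have hKc : IsCompact K := isClosed_closure.isCompact
  have h2 : (fun _ => y₀ : (Fin d → Bool) → Y) ∈ Prod.snd '' K := by
    have hcl : IsClosed (Prod.snd '' K) := (hKc.image continuous_snd).isClosed
    have hsub : (fun f => f V') '' hSetS S ⊆ Prod.snd '' K := by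
      rintro _ ⟨f, hf, rfl⟩
      exact ⟨(f V, f V'), subset_closure ⟨f, hf, rfl⟩, rfl⟩
    exact closure_minimal hsub hcl (ret S hcomm hdistS hminS y₀ hV')
  obtain ⟨pr, hprK, hsnd⟩ := h2
  refine ⟨pr.1, ?_, ?_⟩
  · have h3 : pr.1 ∈ Prod.fst '' K := ⟨pr, hprK, rfl⟩
    have h4 : Prod.fst '' K ⊆ closure (Prod.fst '' ((fun f => (f V, f V')) '' hSetS S)) :=
      image_closure_subset_closure_image continuous_fst
    have h5 : Prod.fst '' ((fun f => (f V, f V')) '' hSetS S) ⊆ cubes S := by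
      rintro _ ⟨_, ⟨f, hf, rfl⟩, rfl⟩
      obtain ⟨n, g, hg, rfl⟩ := hf
      exact hmapS_cubes S hcomm n hg V hV
    exact closure_minimal h5 isClosed_closure (h4 h3)
  · have heta : (pr.1, (fun _ => y₀ : (Fin d → Bool) → Y)) = pr := by
      rw [← hsnd]
    rw [heta]
    exact hprK

end Ellis

lemma mem_rel_of_orbit {Z : Type*} [TopologicalSpace Z] {A : Set (Z → Z)} {V V' : Z}
    {pr : Z × Z} (hpr : pr ∈ closure ((fun f => (f V, f V')) '' A))
    {R : Set (Z × Z)} (hRc : IsClosed R) (hRo : ∀ f ∈ A, (f V, f V') ∈ R) : pr ∈ R :=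
  closure_minimal (by rintro _ ⟨f, hf, rfl⟩; exact hRo f hf) hRc hpr

section Joint

variable {Y X : Type*} [MetricSpace Y] [CompactSpace Y] [TopologicalSpace X]
  (S : Fin d → Y ≃ₜ Y) (T : Fin d → X ≃ₜ X) (π : Y → X)

lemma pi_hSetS (hfac : ∀ (i : Fin d) (y : Y), π (S i y) = T i (π y))
    {f : ((Fin d → Bool) → Y) → ((Fin d → Bool) → Y)} (hf : f ∈ hSetS S)
    (ε : Fin d → Bool) :
    ∃ h ∈ genGroup T, ∀ W, π (f W ε) = h (π (W ε)) := by
  obtain ⟨n, g, hg, rfl⟩ := hf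
  obtain ⟨h, hm, he⟩ := pi_gen S T π hfac g hg
  refine ⟨cubeMap T n ε * h, mul_mem (cubeMap_mem T n ε) hm, fun W => ?_⟩
  calc π (cubeMap S n ε (g (W ε)))
      = cubeMap T n ε (π (g (W ε))) := pi_cubeMap S T π hfac n ε _
    _ = cubeMap T n ε (h (π (W ε))) := by rw [he]
    _ = (cubeMap T n ε * h) (π (W ε)) := rfl

end Joint

/-- **Corollary `cor1`.**  If `π : Y → X` is a factor map between minimal distal
`ℤ^d`-systems and `Y` has the unique closing parallelepiped property, then so does `X`. -/
theorem ucp_of_factor {Y X : Type*} [MetricSpace Y] [CompactSpace Y]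
    [MetricSpace X] [CompactSpace X] {d : ℕ}
    (S : Fin d → Y ≃ₜ Y) (T : Fin d → X ≃ₜ X)
    (hcommS : ∀ i j : Fin d, ∀ y : Y, S i (S j y) = S j (S i y))
    (hcommT : ∀ i j : Fin d, ∀ x : X, T i (T j x) = T j (T i x))
    (hminS : IsMinimalSystem S) (hdistS : IsDistalSystem S)
    (hminT : IsMinimalSystem T) (hdistT : IsDistalSystem T)
    (π : Y → X) (hcont : Continuous π) (hsurj : Function.Surjective π)
    (hfac : ∀ (i : Fin d) (y : Y), π (S i y) = T i (π y))
    (hucp : HasUCP S) : HasUCP T := by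
  intro x hx y hy ε₀ hagree
  funext ε
  by_cases hεε : ε = ε₀
  swap
  · exact hagree ε hεε
  subst hεε
  by_contra hne
  obtain ⟨y₀, -⟩ := hsurj (x ε)
  -- rename ε back to ε₀ for clarity
  rename' ε => ε₀
  -- cube lifting
  have hlift : ∀ w ∈ cubes T, ∃ W ∈ cubes S, ∀ ε, π (W ε) = w ε := by
    intro w hw
    have hQc : IsCompact (cubes S) := isClosed_closure.isCompact
    have hPc : Continuous (fun W : (Fin d → Bool) → Y => fun ε => π (W ε)) := by
      apply continuous_pi
      intro ε
      exact hcont.comp (continuous_apply ε)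
    have himg : IsCompact ((fun W : (Fin d → Bool) → Y => fun ε => π (W ε)) '' cubes S) :=
      hQc.image hPc
    have hsub : {w' : (Fin d → Bool) → X | ∃ x' n, ∀ ε, w' ε = cubeMap T n ε x'}
        ⊆ (fun W : (Fin d → Bool) → Y => fun ε => π (W ε)) '' cubes S := by
      rintro w' ⟨x', n, hw'⟩
      obtain ⟨z, rfl⟩ := hsurj x'
      refine ⟨pt S n z, pt_mem S n z, ?_⟩
      funext ε
      rw [hw' ε]
      show π (cubeMap S n ε z) = cubeMap T n ε (π z)
      exact pi_cubeMap S T π hfac n ε z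
    obtain ⟨W, hWQ, hWe⟩ := closure_minimal hsub himg.isClosed hw
    exact ⟨W, hWQ, fun ε => congrFun hWe ε⟩
  obtain ⟨Wx, hWx, hPx⟩ := hlift x hx
  obtain ⟨Wy, hWy, hPy⟩ := hlift y hy
  obtain ⟨W0, hW0Q, hW0K⟩ := transport S hcommS hdistS hminS y₀ Wx Wy hWx hWy
  have hW0B : ∀ ε', ε' ≠ ε₀ → π (W0 ε') = π y₀ := by
    intro ε' hne'
    have hR : (W0, (fun _ => y₀ : (Fin d → Bool) → Y))
        ∈ {pr : ((Fin d → Bool) → Y) × ((Fin d → Bool) → Y) | π (pr.1 ε') = π (pr.2 ε')} := by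
      refine mem_rel_of_orbit hW0K
        (isClosed_eq (hcont.comp ((continuous_apply ε').comp continuous_fst))
          (hcont.comp ((continuous_apply ε').comp continuous_snd))) ?_
      intro f hf
      obtain ⟨h, hm, he⟩ := pi_hSetS S T π hfac hf ε'
      show π (f Wx ε') = π (f Wy ε')
      rw [he, he, hPx, hPy, hagree ε' hne']
    exact hR
  have hW0C : π (W0 ε₀) ≠ π y₀ := by
    obtain ⟨δ, hδ, hd⟩ := hdistT (x ε₀) (y ε₀) hne
    have hR : δ ≤ dist (π (W0 ε₀)) (π y₀) := by
      refine mem_rel_of_orbit hW0K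
        (isClosed_le continuous_const
          (Continuous.dist (hcont.comp ((continuous_apply ε₀).comp continuous_fst))
            (hcont.comp ((continuous_apply ε₀).comp continuous_snd)))) ?_
      intro f hf
      obtain ⟨h, hm, he⟩ := pi_hSetS S T π hfac hf ε₀
      show δ ≤ dist (π (f Wx ε₀)) (π (f Wy ε₀))
      rw [he, he, hPx, hPy]
      exact hd h hm
    intro hcon
    rw [hcon, dist_self] at hR
    linarith
  -- reflected initial instance
  have hV0Q : refl0 ε₀ W0 ∈ cubes S := refl0_cubes S hcommS ε₀ W0 hW0Q
  have hV0B : ∀ ε', ε' ≠ (fun _ => true) → π (refl0 ε₀ W0 ε') = π y₀ := by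
    intro ε' h
    exact hW0B _ (refl0_arg_ne ε₀ ε' h)
  have hV0C : π (refl0 ε₀ W0 (fun _ => true)) ≠ π y₀ := by
    rw [refl0_top]
    exact hW0C
  -- the game
  have game : ∀ k : ℕ, k ≤ d → ∃ V ∈ cubes S,
      (∀ ε' : Fin d → Bool, (∃ j : Fin d, (j : ℕ) < k ∧ ε' j = false) → V ε' = y₀) ∧
      (∀ ε' : Fin d → Bool, ε' ≠ (fun _ => true) → π (V ε') = π y₀) ∧
      π (V (fun _ => true)) ≠ π y₀ := by
    intro k
    induction k with
    | zero =>
      intro _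
      refine ⟨refl0 ε₀ W0, hV0Q, ?_, hV0B, hV0C⟩
      rintro ε' ⟨j, hj, -⟩
      exact absurd hj (Nat.not_lt_zero _)
    | succ k ih =>
      intro hk
      obtain ⟨V, hVQ, hA, hB, hC⟩ := ih (Nat.le_of_succ_le hk)
      have hkd : k < d := hk
      set i : Fin d := ⟨k, hkd⟩ with hidef
      have hV'Q : dbl i V ∈ cubes S := dbl_cubes S i V hVQ
      obtain ⟨Vs, hVsQ, hVsK⟩ := transport S hcommS hdistS hminS y₀ V (dbl i V) hVQ hV'Q
      have hupd_ne : ∀ ε' : Fin d → Bool,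
          Function.update ε' i false ≠ (fun _ => true) := by
        intro ε' hcon
        have := congrFun hcon i
        rw [Function.update_self] at this
        exact Bool.false_ne_true this
      refine ⟨Vs, hVsQ, ?_, ?_, ?_⟩
      · rintro ε' ⟨j, hjk, hjf⟩
        have hVV' : V ε' = dbl i V ε' := by
          show V ε' = V (Function.update ε' i false)
          cases hεi : ε' i with
          | false =>
            have hupd : Function.update ε' i false = ε' := by
              funext j'
              by_cases hj' : j' = i
              · subst hj'; rw [Function.update_self, hεi]
              · rw [Function.update_of_ne hj']
            rw [hupd]
          | true =>
            have hji : j ≠ i := by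
              intro hcon
              rw [hcon, hεi] at hjf
              exact Bool.noConfusion hjf
            have hjk' : (j : ℕ) < k := by
              have : (j : ℕ) ≠ k := fun h => hji (Fin.ext h)
              omega
            have h1 : V ε' = y₀ := hA ε' ⟨j, hjk', hjf⟩
            have h2 : V (Function.update ε' i false) = y₀ :=
              hA _ ⟨j, hjk', by rw [Function.update_of_ne hji]; exact hjf⟩
            rw [h1, h2]
        have hR : (Vs, (fun _ => y₀ : (Fin d → Bool) → Y))
            ∈ {pr : ((Fin d → Bool) → Y) × ((Fin d → Bool) → Y) | pr.1 ε' = pr.2 ε'} := by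
          refine mem_rel_of_orbit hVsK
            (isClosed_eq ((continuous_apply ε').comp continuous_fst)
              ((continuous_apply ε').comp continuous_snd)) ?_
          rintro f ⟨n, g, hg, rfl⟩
          show cubeMap S n ε' (g (V ε')) = cubeMap S n ε' (g (dbl i V ε'))
          rw [hVV']
        exact hR
      · intro ε' hne'
        have hπV : π (V ε') = π y₀ := hB ε' hne'
        have hπV' : π (dbl i V ε') = π y₀ := by
          show π (V (Function.update ε' i false)) = π y₀
          exact hB _ (hupd_ne ε')
        have hR : (Vs, (fun _ => y₀ : (Fin d → Bool) → Y))
            ∈ {pr : ((Fin d → Bool) → Y) × ((Fin d → Bool) → Y) |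
                π (pr.1 ε') = π (pr.2 ε')} := by
          refine mem_rel_of_orbit hVsK
            (isClosed_eq (hcont.comp ((continuous_apply ε').comp continuous_fst))
              (hcont.comp ((continuous_apply ε').comp continuous_snd))) ?_
          intro f hf
          obtain ⟨h, hm, he⟩ := pi_hSetS S T π hfac hf ε'
          show π (f V ε') = π (f (dbl i V) ε')
          rw [he, he, hπV, hπV']
        exact hR
      · obtain ⟨δ, hδ, hd⟩ := hdistT (π (V (fun _ => true))) (π y₀) hC
        have hπV' : π (dbl i V (fun _ => true)) = π y₀ := by
          show π (V (Function.update (fun _ => true) i false)) = π y₀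
          exact hB _ (hupd_ne _)
        have hR : δ ≤ dist (π (Vs (fun _ => true))) (π y₀) := by
          refine mem_rel_of_orbit hVsK
            (isClosed_le continuous_const
              (Continuous.dist
                (hcont.comp ((continuous_apply (fun _ => true)).comp continuous_fst))
                (hcont.comp ((continuous_apply (fun _ => true)).comp continuous_snd)))) ?_
          intro f hf
          obtain ⟨h, hm, he⟩ := pi_hSetS S T π hfac hf (fun _ => true)
          show δ ≤ dist (π (f V (fun _ => true))) (π (f (dbl i V) (fun _ => true)))
          rw [he, he, hπV']
          exact hd h hm
        intro hcon
        rw [hcon, dist_self] at hR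
        linarith
  -- endgame
  obtain ⟨V, hVQ, hA, hB, hC⟩ := game d le_rfl
  have hVtop : ∀ ε', ε' ≠ (fun _ => true) → V ε' = y₀ := by
    intro ε' h
    obtain ⟨j, hj⟩ : ∃ j, ε' j = false := by
      by_contra hcon
      push_neg at hcon
      apply h
      funext j
      cases hh : ε' j with
      | false => exact absurd hh (hcon j)
      | true => rfl
    exact hA ε' ⟨j, j.isLt, hj⟩
  have hΔQ : (fun _ => y₀ : (Fin d → Bool) → Y) ∈ cubes S := by
    have := pt_mem S (fun _ => 0) y₀
    rwa [pt_zero] at this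
  have hVeq := hucp (fun _ => y₀) hΔQ V hVQ (fun _ => true)
    (fun ε' h => (hVtop ε' h).symm)
  apply hC
  rw [← hVeq]
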